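/- arXiv:1510.05403 — 7 statements merged into one kernel-verified Lean document; each statement's English description precedes it below -/
import Mathlib

section
/- For every graph G, box(G) = min{|C| : C is a cointerval edge covering of Ḡ}; equivalently, box(G) ≤ k if and only if there exists a cointerval edge covering C of Ḡ with |C| = k. -/
open scoped Classical

/-- A graph is an interval graph if it is the intersection graph of closed
intervals on the real line. -/
def IsIntervalGraph {V : Type*} (G : SimpleGraph V) : Prop :=
  ∃ f : V → ℝ × ℝ, (∀ v, (f v).1 ≤ (f v).2) ∧
    ∀ u v, u ≠ v →
      (G.Adj u v ↔ max (f u).1 (f v).1 ≤ min (f u).2 (f v).2)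

/-- A graph is cointerval if its complement is an interval graph. -/
def IsCointerval {V : Type*} (G : SimpleGraph V) : Prop :=
  IsIntervalGraph Gᶜ

/-- `G` is isomorphic to the intersection graph of a family of axis-parallel
boxes in `ℝ^k`. -/
def HasBoxRep {V : Type*} (G : SimpleGraph V) (k : ℕ) : Prop :=
  ∃ f : V → Fin k → ℝ × ℝ, (∀ v i, (f v i).1 ≤ (f v i).2) ∧
    ∀ u v, u ≠ v →
      (G.Adj u v ↔ ∀ i, max (f u i).1 (f v i).1 ≤ min (f u i).2 (f v i).2)

/-- The boxicity of a graph. -/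
noncomputable def boxicity {V : Type*} (G : SimpleGraph V) : ℕ :=
  sInf {k | HasBoxRep G k}

/-- The `s`-fold boxicity: minimum size of a multiset of cointerval subgraphs
of the complement covering each edge of the complement at least `s` times. -/
noncomputable def boxS {V : Type*} (G : SimpleGraph V) (s : ℕ) : ℕ :=
  sInf {k | ∃ C : Multiset (SimpleGraph V), C.card = k ∧
    (∀ H ∈ C, H ≤ Gᶜ ∧ IsCointerval H) ∧
    ∀ e ∈ Gᶜ.edgeSet, s ≤ Multiset.countP (fun H => e ∈ H.edgeSet) C}

/-- A hyperedge of the hypergraph `H_G`: a set of edges of `Ḡ` inducing a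
cointerval subgraph of `Ḡ`. -/
def IsHyperedge {V : Type*} (G : SimpleGraph V) (E : Finset (Sym2 V)) : Prop :=
  ↑E ⊆ Gᶜ.edgeSet ∧ IsCointerval (SimpleGraph.fromEdgeSet (↑E : Set (Sym2 V)))

/-- The fractional boxicity of `G`: the value of the LP relaxation of the
covering program of the hypergraph `H_G`. -/
noncomputable def fracBoxicity {V : Type*} [Fintype V] [DecidableEq V]
    (G : SimpleGraph V) : ℝ :=
  sInf {r | ∃ x : Finset (Sym2 V) → ℝ, (∀ E, 0 ≤ x E) ∧
    (∀ E, ¬ IsHyperedge G E → x E = 0) ∧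
    (∀ e ∈ Gᶜ.edgeFinset, 1 ≤ ∑ E : Finset (Sym2 V), if e ∈ E then x E else 0) ∧
    r = ∑ E : Finset (Sym2 V), x E}

/-- `Ḡ` is edge-transitive. -/
def EdgeTransitiveCompl {V : Type*} (G : SimpleGraph V) : Prop :=
  ∀ e ∈ Gᶜ.edgeSet, ∀ f ∈ Gᶜ.edgeSet, ∃ π : Equiv.Perm V,
    (∀ u v, Gᶜ.Adj u v ↔ Gᶜ.Adj (π u) (π v)) ∧ Sym2.map π e = f


/-- The complete multipartite graph with parts `Fin (n i)`. -/
def completeMultipartite (k : ℕ) (n : Fin k → ℕ) :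
    SimpleGraph (Σ i : Fin k, Fin (n i)) :=
  SimpleGraph.fromRel (fun a b => a.1 ≠ b.1)

/-- The disjoint union of cliques `K_{n 0} ∪ ... ∪ K_{n (k-1)}`. -/
def cliqueUnion (k : ℕ) (n : Fin k → ℕ) :
    SimpleGraph (Σ i : Fin k, Fin (n i)) :=
  SimpleGraph.fromRel (fun a b => a.1 = b.1)

/-- The fractional matching number of the hypergraph `H_G`. -/
noncomputable def fracMatching {V : Type*} [Fintype V] [DecidableEq V]
    (G : SimpleGraph V) : ℝ :=
  sSup {r | ∃ y : Sym2 V → ℝ, (∀ e, 0 ≤ y e) ∧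
    (∀ e ∉ Gᶜ.edgeFinset, y e = 0) ∧
    (∀ E : Finset (Sym2 V), IsHyperedge G E → ∑ e ∈ E, y e ≤ 1) ∧
    r = ∑ e ∈ Gᶜ.edgeFinset, y e}


def CoverPred {V : Type*} (G : SimpleGraph V) (k : ℕ) : Prop :=
  ∃ C : Multiset (SimpleGraph V), C.card = k ∧
    (∀ H ∈ C, H ≤ Gᶜ ∧ IsCointerval H) ∧
    ∀ e ∈ Gᶜ.edgeSet, ∃ H ∈ C, e ∈ H.edgeSet

lemma isCointerval_bot {V : Type*} : IsCointerval (⊥ : SimpleGraph V) := by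
  refine ⟨fun _ => (0,1), fun v => by norm_num, fun u v huv => ?_⟩
  simp [huv]

lemma coverPred_succ {V : Type*} (G : SimpleGraph V) (k : ℕ)
    (h : CoverPred G k) : CoverPred G (k+1) := by
  obtain ⟨C, hc, hmem, hcov⟩ := h
  refine ⟨⊥ ::ₘ C, by simp [hc], ?_, ?_⟩
  · intro H hH
    rcases Multiset.mem_cons.mp hH with rfl | hH
    · exact ⟨bot_le, isCointerval_bot⟩
    · exact hmem H hH
  · intro e he
    obtain ⟨H, hH, he'⟩ := hcov e he
    exact ⟨H, Multiset.mem_cons_of_mem hH, he'⟩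

lemma coverPred_mono {V : Type*} (G : SimpleGraph V) {m k : ℕ}
    (hm : CoverPred G m) (hmk : m ≤ k) : CoverPred G k := by
  induction k, hmk using Nat.le_induction with
  | base => exact hm
  | succ n _ ih => exact coverPred_succ G n ih

lemma isCointerval_singleEdge {V : Type*} (a b : V) (hab : a ≠ b) :
    IsCointerval (SimpleGraph.fromEdgeSet {s(a,b)}) := by
  refine ⟨fun x => if x = a then (0,1) else if x = b then (2,3) else (0,3), ?_, ?_⟩
  · intro v; dsimp only; split_ifs <;> norm_num
  · intro u v huv
    rw [SimpleGraph.compl_adj, SimpleGraph.fromEdgeSet_adj]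
    simp only [Set.mem_singleton_iff, Sym2.eq_iff]
    by_cases hua : u = a <;> by_cases hub : u = b <;>
      by_cases hva : v = a <;> by_cases hvb : v = b <;>
      subst_vars <;> simp_all <;> norm_num

lemma hasBoxRep_iff_coverPred {V : Type*} (G : SimpleGraph V) (k : ℕ) :
    HasBoxRep G k ↔ CoverPred G k := by
  constructor
  · rintro ⟨f, hle, hadj⟩
    set H : Fin k → SimpleGraph V := fun i => SimpleGraph.fromRel
      (fun u v => ¬ (max (f u i).1 (f v i).1 ≤ min (f u i).2 (f v i).2)) with hH
    have Hadj : ∀ i u v, (H i).Adj u v ↔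
        u ≠ v ∧ ¬ (max (f u i).1 (f v i).1 ≤ min (f u i).2 (f v i).2) := by
      intro i u v
      rw [hH]
      rw [SimpleGraph.fromRel_adj]
      constructor
      · rintro ⟨hne, h | h⟩
        · exact ⟨hne, h⟩
        · refine ⟨hne, ?_⟩
          rwa [max_comm, min_comm] at h
      · rintro ⟨hne, h⟩; exact ⟨hne, Or.inl h⟩
    have hleG : ∀ i, H i ≤ Gᶜ := by
      intro i u v huv
      obtain ⟨hne, hdisj⟩ := (Hadj i u v).mp huv
      rw [SimpleGraph.compl_adj]
      exact ⟨hne, fun hG => hdisj ((hadj u v hne).mp hG i)⟩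
    refine ⟨(Finset.univ : Finset (Fin k)).val.map H, by simp, ?_, ?_⟩
    · intro K hK
      obtain ⟨i, _, rfl⟩ := Multiset.mem_map.mp hK
      refine ⟨hleG i, fun v => f v i, fun v => hle v i, ?_⟩
      intro u v huv
      rw [SimpleGraph.compl_adj, Hadj]
      constructor
      · rintro ⟨_, h⟩
        by_contra hc
        exact h ⟨huv, hc⟩
      · intro h
        exact ⟨huv, fun hc => hc.2 h⟩
    · intro e he
      induction e using Sym2.ind with
      | _ u v =>
        rw [SimpleGraph.mem_edgeSet, SimpleGraph.compl_adj] at he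
        obtain ⟨hne, hG⟩ := he
        have : ¬ ∀ i, max (f u i).1 (f v i).1 ≤ min (f u i).2 (f v i).2 :=
          fun h => hG ((hadj u v hne).mpr h)
        push_neg at this
        obtain ⟨i, hi⟩ := this
        refine ⟨H i, Multiset.mem_map.mpr ⟨i, Finset.mem_univ i, rfl⟩, ?_⟩
        rw [SimpleGraph.mem_edgeSet, Hadj]
        exact ⟨hne, not_le.mpr hi⟩
  · rintro ⟨C, hcard, hmem, hcov⟩
    set L := C.toList with hLdef
    have hlen : L.length = k := by rw [hLdef, Multiset.length_toList, hcard]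
    have hmemL : ∀ i : Fin k, L.get (Fin.cast hlen.symm i) ∈ C := fun i => by
      rw [← Multiset.mem_toList]; exact List.mem_iff_get.mpr ⟨_, rfl⟩
    choose g hg1 hg2 using fun i : Fin k => (hmem _ (hmemL i)).2
    refine ⟨fun v i => g i v, fun v i => hg1 i v, ?_⟩
    intro u v huv
    constructor
    · intro hG i
      have hle := (hmem _ (hmemL i)).1
      have hnadj : ¬ (L.get (Fin.cast hlen.symm i)).Adj u v := fun h =>
        ((SimpleGraph.compl_adj _ u v).mp (hle h)).2 hG
      exact (hg2 i u v huv).mp ((SimpleGraph.compl_adj _ u v).mpr ⟨huv, hnadj⟩)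
    · intro hall
      by_contra hG
      have hmem' : s(u,v) ∈ Gᶜ.edgeSet := by
        rw [SimpleGraph.mem_edgeSet]
        exact (SimpleGraph.compl_adj _ u v).mpr ⟨huv, hG⟩
      obtain ⟨K, hKC, heK⟩ := hcov _ hmem'
      obtain ⟨j, hj⟩ := List.mem_iff_get.mp (Multiset.mem_toList.mpr hKC)
      set i : Fin k := Fin.cast hlen j with hi
      have hgetK : L.get (Fin.cast hlen.symm i) = K := by
        rw [hi]
        simpa using hj
      have hKadj : (L.get (Fin.cast hlen.symm i)).Adj u v := by
        rw [hgetK, ← SimpleGraph.mem_edgeSet]; exact heK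
      have := (SimpleGraph.compl_adj _ u v).mp ((hg2 i u v huv).mpr (hall i))
      exact this.2 hKadj

lemma coverPred_exists {V : Type*} [Fintype V] (G : SimpleGraph V) :
    ∃ k, CoverPred G k := by
  have hfin : Gᶜ.edgeSet.Finite := Set.toFinite _
  refine ⟨hfin.toFinset.card,
    hfin.toFinset.val.map (fun e => SimpleGraph.fromEdgeSet {e}),
    by rw [Multiset.card_map]; rfl, ?_, ?_⟩
  · intro H hH
    obtain ⟨e, he, rfl⟩ := Multiset.mem_map.mp hH
    rw [Finset.mem_val, Set.Finite.mem_toFinset] at he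
    constructor
    · intro u v huv
      rw [SimpleGraph.fromEdgeSet_adj] at huv
      obtain ⟨h1, h2⟩ := huv
      rw [Set.mem_singleton_iff] at h1
      rw [← h1] at he
      rwa [SimpleGraph.mem_edgeSet] at he
    · induction e using Sym2.ind with
      | _ a b =>
        rw [SimpleGraph.mem_edgeSet] at he
        exact isCointerval_singleEdge a b he.ne
  · intro e he
    refine ⟨SimpleGraph.fromEdgeSet {e}, Multiset.mem_map.mpr
      ⟨e, Finset.mem_val.mpr (Set.Finite.mem_toFinset _ |>.mpr he), rfl⟩, ?_⟩
    rw [SimpleGraph.edgeSet_fromEdgeSet]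
    refine ⟨rfl, ?_⟩
    induction e using Sym2.ind with
    | _ u v =>
      rw [SimpleGraph.mem_edgeSet] at he
      simpa using he.ne

/-- Cozzens–Roberts: the boxicity equals the minimum size of a cointerval
edge covering of the complement, and `box(G) ≤ k` iff there exists such a
covering with exactly `k` members. -/
theorem boxicity_eq_min_cointerval_edge_covering {V : Type*} [Fintype V]
    (G : SimpleGraph V) :
    boxicity G = sInf {k | ∃ C : Multiset (SimpleGraph V), C.card = k ∧
        (∀ H ∈ C, H ≤ Gᶜ ∧ IsCointerval H) ∧
        ∀ e ∈ Gᶜ.edgeSet, ∃ H ∈ C, e ∈ H.edgeSet} ∧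
      ∀ k : ℕ, (boxicity G ≤ k ↔ ∃ C : Multiset (SimpleGraph V), C.card = k ∧
        (∀ H ∈ C, H ≤ Gᶜ ∧ IsCointerval H) ∧
        ∀ e ∈ Gᶜ.edgeSet, ∃ H ∈ C, e ∈ H.edgeSet) := by
  have hset : {k | HasBoxRep G k} = {k | CoverPred G k} :=
    Set.ext fun k => hasBoxRep_iff_coverPred G k
  have hbox : boxicity G = sInf {k | CoverPred G k} := by
    rw [boxicity, hset]
  have hne : {k | CoverPred G k}.Nonempty := coverPred_exists G
  constructor
  · exact hbox
  · intro k
    rw [hbox]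
    constructor
    · intro h
      exact coverPred_mono G (Nat.sInf_mem hne) h
    · intro h
      exact Nat.sInf_le h
end

section
/- For every graph G, box(G) ≥ |E(Ḡ)| / |E(Ī_min)|, where I_min is an interval supergraph of G on the same vertex set with minimum number of edges among all such interval supergraphs. -/
open scoped Classical

lemma exists_hasBoxRep {V : Type*} [Fintype V] [DecidableEq V] (G : SimpleGraph V) :
    ∃ k, HasBoxRep G k := by
  classical
  set s := Gᶜ.edgeFinset with hs
  refine ⟨s.card, ?_⟩
  set eqv := s.equivFin with heqv
  let a : Fin s.card → V := fun i => (Quot.out ((eqv.symm i : Sym2 V))).1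
  let b : Fin s.card → V := fun i => (Quot.out ((eqv.symm i : Sym2 V))).2
  have hmk : ∀ i, s(a i, b i) = (eqv.symm i : Sym2 V) := fun i => Quot.out_eq _
  have hadj : ∀ i, Gᶜ.Adj (a i) (b i) := by
    intro i
    have h1 : (eqv.symm i : Sym2 V) ∈ Gᶜ.edgeSet :=
      SimpleGraph.mem_edgeFinset.mp (eqv.symm i).2
    rw [← hmk i] at h1
    exact h1
  have hne : ∀ i, a i ≠ b i := fun i => (hadj i).ne
  have hnadj : ∀ i, ¬ G.Adj (a i) (b i) := fun i =>
    ((G.compl_adj (a i) (b i)).mp (hadj i)).2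
  refine ⟨fun v i => if v = a i then ((0:ℝ),(0:ℝ)) else if v = b i then (2,2) else (0,2),
    ?_, ?_⟩
  · intro v i; dsimp only; split_ifs <;> norm_num
  · intro u v huv
    constructor
    · intro hG i
      dsimp only
      split_ifs with h1 h2 h3 h4 h5 h6 h7 h8
      case _ => exact absurd (h1.trans h2.symm) huv
      case _ => exact absurd (show G.Adj (a i) (b i) by rw [← h1, ← h3]; exact hG) (hnadj i)
      case _ => norm_num
      case _ => exact absurd (show G.Adj (a i) (b i) by rw [← h5, ← h4]; exact hG.symm) (hnadj i)
      case _ => exact absurd (h4.trans h6.symm) huv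
      case _ => norm_num
      case _ => norm_num
      case _ => norm_num
      case _ => norm_num
    · intro h
      by_contra hG
      have hc : Gᶜ.Adj u v := ⟨huv, hG⟩
      have hmem : s(u, v) ∈ s := SimpleGraph.mem_edgeFinset.mpr hc
      set i := eqv ⟨s(u, v), hmem⟩ with hi
      have he : s(a i, b i) = s(u, v) := by
        rw [hmk i, hi, Equiv.symm_apply_apply]
      have h' := h i
      dsimp only at h'
      rw [Sym2.eq_iff] at he
      rcases he with ⟨h1, h2⟩ | ⟨h1, h2⟩
      · rw [if_pos h1.symm, if_neg (by rw [← h2]; exact (hne i).symm),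
          if_pos h2.symm] at h'
        norm_num at h'
      · rw [if_neg (by rw [← h2]; exact (hne i).symm), if_pos h2.symm,
          if_pos h1.symm] at h'
        norm_num at h'

lemma card_edgeFinset_compl_le {V : Type*} [Fintype V] [DecidableEq V]
    (G H : SimpleGraph V) (h : G.edgeFinset.card ≤ H.edgeFinset.card) :
    Hᶜ.edgeFinset.card ≤ Gᶜ.edgeFinset.card := by
  have key : ∀ K : SimpleGraph V, Kᶜ.edgeFinset =
      (⊤ : SimpleGraph V).edgeFinset \ K.edgeFinset := by
    intro K
    ext e
    induction e using Sym2.ind with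
    | _ u v =>
      simp [SimpleGraph.mem_edgeFinset, SimpleGraph.compl_adj, and_comm]
  rw [key, key, Finset.card_sdiff_of_subset (SimpleGraph.edgeFinset_mono le_top),
    Finset.card_sdiff_of_subset (SimpleGraph.edgeFinset_mono le_top)]
  omega

/-- Adiga et al.: lower bound for boxicity via a minimum interval supergraph. -/
theorem boxicity_ge_edge_ratio {V : Type*} [Fintype V] [DecidableEq V]
    (G Imin : SimpleGraph V) (hI : IsIntervalGraph Imin) (hsub : G ≤ Imin)
    (hmin : ∀ I : SimpleGraph V, IsIntervalGraph I → G ≤ I →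
      Imin.edgeFinset.card ≤ I.edgeFinset.card) :
    (Gᶜ.edgeFinset.card : ℝ) / (Iminᶜ.edgeFinset.card : ℝ) ≤ (boxicity G : ℝ) := by
  classical
  rcases Nat.eq_zero_or_pos Iminᶜ.edgeFinset.card with hm | hm
  · rw [hm]
    simp [Nat.cast_nonneg]
  have hmemS : boxicity G ∈ {k | HasBoxRep G k} :=
    Nat.sInf_mem (exists_hasBoxRep G)
  obtain ⟨f, hf1, hf2⟩ := hmemS
  -- per-dimension interval supergraphs
  let I : Fin (boxicity G) → SimpleGraph V := fun i =>
    SimpleGraph.fromRel (fun u v => max (f u i).1 (f v i).1 ≤ min (f u i).2 (f v i).2)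
  have hIadj : ∀ i u v, (I i).Adj u v ↔
      u ≠ v ∧ max (f u i).1 (f v i).1 ≤ min (f u i).2 (f v i).2 := by
    intro i u v
    rw [SimpleGraph.fromRel_adj]
    constructor
    · rintro ⟨hne, h | h⟩
      · exact ⟨hne, h⟩
      · refine ⟨hne, ?_⟩; rwa [max_comm, min_comm]
    · rintro ⟨hne, h⟩; exact ⟨hne, Or.inl h⟩
  have hIint : ∀ i, IsIntervalGraph (I i) := by
    intro i
    refine ⟨fun v => f v i, fun v => hf1 v i, fun u v huv => ?_⟩
    rw [hIadj]
    simp [huv]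
  have hIsub : ∀ i, G ≤ I i := by
    intro i u v h
    rw [hIadj]
    exact ⟨h.ne, (hf2 u v h.ne).mp h i⟩
  have hcard : ∀ i, (I i)ᶜ.edgeFinset.card ≤ Iminᶜ.edgeFinset.card := fun i =>
    by convert card_edgeFinset_compl_le Imin (I i) (hmin (I i) (hIint i) (hIsub i))
  -- covering
  have hcover : Gᶜ.edgeFinset ⊆
      Finset.univ.biUnion (fun i : Fin (boxicity G) => (I i)ᶜ.edgeFinset) := by
    intro e he
    induction e using Sym2.ind with
    | _ u v =>
      rw [SimpleGraph.mem_edgeFinset, SimpleGraph.mem_edgeSet, G.compl_adj] at he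
      obtain ⟨hne, hnadj⟩ := he
      have : ¬ ∀ i, max (f u i).1 (f v i).1 ≤ min (f u i).2 (f v i).2 := by
        intro h; exact hnadj ((hf2 u v hne).mpr h)
      push_neg at this
      obtain ⟨i, hi⟩ := this
      refine Finset.mem_biUnion.mpr ⟨i, Finset.mem_univ i, ?_⟩
      rw [SimpleGraph.mem_edgeFinset, SimpleGraph.mem_edgeSet, SimpleGraph.compl_adj]
      refine ⟨hne, fun hadj => ?_⟩
      exact absurd ((hIadj i u v).mp hadj).2 (not_le.mpr hi)
  have hcount : Gᶜ.edgeFinset.card ≤ boxicity G * Iminᶜ.edgeFinset.card := by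
    calc Gᶜ.edgeFinset.card
        ≤ (Finset.univ.biUnion (fun i : Fin (boxicity G) => (I i)ᶜ.edgeFinset)).card :=
          Finset.card_le_card hcover
      _ ≤ ∑ i : Fin (boxicity G), (I i)ᶜ.edgeFinset.card := Finset.card_biUnion_le
      _ ≤ ∑ _i : Fin (boxicity G), Iminᶜ.edgeFinset.card := Finset.sum_le_sum fun i _ => hcard i
      _ = boxicity G * Iminᶜ.edgeFinset.card := by simp [Finset.sum_const, mul_comm]
  rw [div_le_iff₀ (by exact_mod_cast hm)]
  exact_mod_cast hcount
end

section
/- If Ḡ is edge-transitive, then box_f(G) = |E(Ḡ)| / max{|E_i| : E_i ∈ E(H_G)}, the ratio of the number of edges of Ḡ to the maximum size of an edge set of a cointerval subgraph of Ḡ. -/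
open scoped Classical

lemma singleton_hyperedge {V : Type*} [DecidableEq V] (G : SimpleGraph V) (e : Sym2 V)
    (he : e ∈ Gᶜ.edgeSet) : IsHyperedge G {e} := by
  constructor
  · intro x hx
    simp only [Finset.coe_singleton, Set.mem_singleton_iff] at hx
    subst hx; exact he
  · induction e with
    | _ a b =>
      have hab : a ≠ b := ((SimpleGraph.mem_edgeSet (G:=Gᶜ)).mp he).ne
      refine ⟨fun v => if v = a then (0,1) else if v = b then (2,3) else (0,3), ?_, ?_⟩
      · intro v; by_cases hva : v = a <;> by_cases hvb : v = b <;> simp_all <;> norm_num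
      · intro u v huv
        have : (SimpleGraph.fromEdgeSet (↑({s(a,b)} : Finset (Sym2 V)) : Set (Sym2 V)))ᶜ.Adj u v
            ↔ ¬ (s(u,v) = s(a,b)) := by
          simp [SimpleGraph.fromEdgeSet_adj, huv]
        rw [this, Sym2.eq_iff]
        by_cases hua : u = a <;> by_cases hub : u = b <;> by_cases hva : v = a <;>
          by_cases hvb : v = b <;>
          simp_all <;> norm_num

lemma map_mem_image_iff {V : Type*} [DecidableEq V] (π : Equiv.Perm V) (E : Finset (Sym2 V))
    (e : Sym2 V) : e ∈ E.image (Sym2.map π) ↔ Sym2.map π.symm e ∈ E := by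
  rw [Finset.mem_image]
  constructor
  · rintro ⟨w, hw, rfl⟩
    rw [Sym2.map_map]
    simpa using hw
  · intro hw
    exact ⟨_, hw, by rw [Sym2.map_map]; simp⟩

lemma hyperedge_image {V : Type*} [DecidableEq V] (G : SimpleGraph V) (π : Equiv.Perm V)
    (hπ : ∀ u v, Gᶜ.Adj u v ↔ Gᶜ.Adj (π u) (π v)) (E : Finset (Sym2 V))
    (hE : IsHyperedge G E) : IsHyperedge G (E.image (Sym2.map π)) := by
  obtain ⟨hsub, f, hf1, hf2⟩ := hE
  constructor
  · intro x hx
    simp only [Finset.coe_image, Set.mem_image, Finset.mem_coe] at hx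
    obtain ⟨w, hw, rfl⟩ := hx
    have := hsub hw
    induction w with
    | _ a b =>
      simp only [Sym2.map_pair_eq, SimpleGraph.mem_edgeSet] at this ⊢
      exact (hπ a b).mp this
  · refine ⟨fun v => f (π.symm v), fun v => hf1 _, ?_⟩
    intro u v huv
    have hne : π.symm u ≠ π.symm v := fun hc => huv (π.symm.injective hc)
    rw [← hf2 _ _ hne]
    simp only [SimpleGraph.compl_adj, SimpleGraph.fromEdgeSet_adj, Finset.mem_coe]
    rw [show s(π.symm u, π.symm v) = Sym2.map π.symm s(u,v) from rfl,
      ← map_mem_image_iff π E s(u,v)]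
    constructor
    · rintro ⟨h1, h2⟩
      exact ⟨hne, fun hc => h2 ⟨hc.1, huv⟩⟩
    · rintro ⟨h1, h2⟩
      exact ⟨huv, fun hc => h2 ⟨hc.1, hne⟩⟩

noncomputable def AutC {V : Type*} [Fintype V] [DecidableEq V] (G : SimpleGraph V) :
    Finset (Equiv.Perm V) :=
  Finset.univ.filter (fun π => ∀ u v, Gᶜ.Adj u v ↔ Gᶜ.Adj (π u) (π v))

lemma mem_autC {V : Type*} [Fintype V] [DecidableEq V] {G : SimpleGraph V}
    {π : Equiv.Perm V} : π ∈ AutC G ↔ ∀ u v, Gᶜ.Adj u v ↔ Gᶜ.Adj (π u) (π v) := by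
  simp [AutC]

lemma autC_trans {V : Type*} [Fintype V] [DecidableEq V] {G : SimpleGraph V}
    {π ρ : Equiv.Perm V} (hπ : π ∈ AutC G) (hρ : ρ ∈ AutC G) : π.trans ρ ∈ AutC G := by
  rw [mem_autC] at *
  intro u v
  rw [hπ u v, hρ (π u) (π v)]; simp

lemma autC_symm {V : Type*} [Fintype V] [DecidableEq V] {G : SimpleGraph V}
    {π : Equiv.Perm V} (hπ : π ∈ AutC G) : π.symm ∈ AutC G := by
  rw [mem_autC] at *
  intro u v
  conv_lhs => rw [show u = π (π.symm u) by simp, show v = π (π.symm v) by simp, ← hπ]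

lemma autC_map_edge {V : Type*} [Fintype V] [DecidableEq V] {G : SimpleGraph V}
    {π : Equiv.Perm V} (hπ : π ∈ AutC G) {e : Sym2 V} (he : e ∈ Gᶜ.edgeSet) :
    Sym2.map (⇑π) e ∈ Gᶜ.edgeSet := by
  rw [mem_autC] at hπ
  induction e with
  | _ a b => exact ((SimpleGraph.mem_edgeSet (G:=Gᶜ)).mpr ((hπ a b).mp he))

lemma sym2_map_symm {V : Type*} (π : Equiv.Perm V) (e : Sym2 V) :
    Sym2.map (⇑π.symm) (Sym2.map (⇑π) e) = e := by
  induction e with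
  | _ a b => simp

lemma sym2_map_trans {V : Type*} (π ρ : Equiv.Perm V) (e : Sym2 V) :
    Sym2.map (⇑(π.trans ρ)) e = Sym2.map (⇑ρ) (Sym2.map (⇑π) e) := by
  rw [Sym2.map_map]; rfl

noncomputable def cnt {V : Type*} [Fintype V] [DecidableEq V] (G : SimpleGraph V)
    (f e : Sym2 V) : ℕ :=
  ((AutC G).filter (fun π : Equiv.Perm V => Sym2.map (⇑π) f = e)).card

lemma count_eq {V : Type*} [Fintype V] [DecidableEq V] {G : SimpleGraph V}
    (hET : EdgeTransitiveCompl G) {f e f' e' : Sym2 V} (hf : f ∈ Gᶜ.edgeSet)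
    (he : e ∈ Gᶜ.edgeSet) (hf' : f' ∈ Gᶜ.edgeSet) (he' : e' ∈ Gᶜ.edgeSet) :
    cnt G f e = cnt G f' e' := by
  obtain ⟨σ, hσ, hσe⟩ := hET e he e' he'
  obtain ⟨τ, hτ, hτf⟩ := hET f' hf' f hf
  have hσA : σ ∈ AutC G := mem_autC.mpr hσ
  have hτA : τ ∈ AutC G := mem_autC.mpr hτ
  refine Finset.card_bij' (fun π _ => τ.trans (π.trans σ))
    (fun ρ _ => τ.symm.trans (ρ.trans σ.symm)) ?_ ?_ ?_ ?_
  · intro π hπ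
    rw [Finset.mem_filter] at hπ ⊢
    refine ⟨autC_trans hτA (autC_trans hπ.1 hσA), ?_⟩
    rw [sym2_map_trans, sym2_map_trans, hτf, hπ.2, hσe]
  · intro ρ hρ
    rw [Finset.mem_filter] at hρ ⊢
    refine ⟨autC_trans (autC_symm hτA) (autC_trans hρ.1 (autC_symm hσA)), ?_⟩
    rw [sym2_map_trans, sym2_map_trans, ← hτf, sym2_map_symm, hρ.2, ← hσe, sym2_map_symm]
  · intro π hπ; ext x; simp
  · intro ρ hρ; ext x; simp

/-- If `Ḡ` is edge-transitive, the fractional boxicity equals the ratio of the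
number of edges of `Ḡ` to the maximum hyperedge size of `H_G`. -/
theorem fracBoxicity_eq_ratio_of_edge_transitive {V : Type*} [Fintype V]
    [DecidableEq V] (G : SimpleGraph V) (hET : EdgeTransitiveCompl G)
    (h : Gᶜ.edgeFinset.Nonempty) :
    fracBoxicity G = (Gᶜ.edgeFinset.card : ℝ) /
      ((sSup {m : ℕ | ∃ E : Finset (Sym2 V), IsHyperedge G E ∧ E.card = m} : ℕ) : ℝ) := by
  classical
  obtain ⟨e₀, he₀⟩ := h
  have he₀' : e₀ ∈ Gᶜ.edgeSet := SimpleGraph.mem_edgeFinset.mp he₀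
  set N := Gᶜ.edgeFinset.card with hN
  set S := {m : ℕ | ∃ E : Finset (Sym2 V), IsHyperedge G E ∧ E.card = m} with hS
  have h1S : 1 ∈ S := ⟨{e₀}, singleton_hyperedge G e₀ he₀', by simp⟩
  have hbdd : BddAbove S := by
    refine ⟨Fintype.card (Sym2 V), ?_⟩
    rintro m ⟨E, _, rfl⟩
    exact le_trans (Finset.card_le_univ E) (le_of_eq Finset.card_univ)
  set B := sSup S with hB
  have hBS : B ∈ S := Nat.sSup_mem ⟨1, h1S⟩ hbdd
  obtain ⟨E₀, hE₀, hE₀card⟩ := hBS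
  have hB1 : 1 ≤ B := le_csSup hbdd h1S
  have hBpos : (0:ℝ) < (B:ℝ) := by exact_mod_cast hB1
  set c := cnt G e₀ e₀ with hc
  have hc1 : 1 ≤ c := by
    obtain ⟨π, hπ, hπe⟩ := hET e₀ he₀' e₀ he₀'
    refine Nat.one_le_iff_ne_zero.mpr (fun hz => ?_)
    have : π ∈ (AutC G).filter (fun π : Equiv.Perm V => Sym2.map (⇑π) e₀ = e₀) :=
      Finset.mem_filter.mpr ⟨mem_autC.mpr hπ, hπe⟩
    rw [hc, cnt] at hz
    exact Finset.notMem_empty π (Finset.card_eq_zero.mp hz ▸ this)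
  have hcpos : (0:ℝ) < (c:ℝ) := by exact_mod_cast hc1
  have hcnt : ∀ f ∈ Gᶜ.edgeSet, ∀ e ∈ Gᶜ.edgeSet, cnt G f e = c :=
    fun f hf e he => count_eq hET hf he he₀' he₀'
  have hE₀sub : ∀ f ∈ E₀, f ∈ Gᶜ.edgeSet := fun f hf => hE₀.1 hf
  -- cover count
  have hcover : ∀ e ∈ Gᶜ.edgeSet,
      ((AutC G).filter (fun π : Equiv.Perm V => e ∈ E₀.image (Sym2.map ⇑π))).card = B * c := by
    intro e he
    have hsplit : ((AutC G).filter (fun π : Equiv.Perm V => e ∈ E₀.image (Sym2.map ⇑π)))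
        = E₀.biUnion (fun f => (AutC G).filter (fun π : Equiv.Perm V => Sym2.map (⇑π) f = e)) := by
      ext π
      simp only [Finset.mem_filter, Finset.mem_biUnion, Finset.mem_image]
      tauto
    rw [hsplit, Finset.card_biUnion ?_]
    · have hc' : ∀ f ∈ E₀, ((AutC G).filter
          (fun π : Equiv.Perm V => Sym2.map (⇑π) f = e)).card = c :=
        fun f hf => hcnt f (hE₀sub f hf) e he
      rw [Finset.sum_congr rfl hc', Finset.sum_const, smul_eq_mul, hE₀card]
    · intro f hf f' hf' hff
      refine Finset.disjoint_left.mpr fun π hπ hπ' => hff ?_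
      rw [Finset.mem_filter] at hπ hπ'
      have := hπ.2.trans hπ'.2.symm
      exact Sym2.map.injective π.injective this
  -- total count
  have htotal : (AutC G).card = N * c := by
    have hsplit : (AutC G) = Gᶜ.edgeFinset.biUnion
        (fun e => (AutC G).filter (fun π : Equiv.Perm V => Sym2.map (⇑π) e₀ = e)) := by
      ext π
      simp only [Finset.mem_biUnion, Finset.mem_filter]
      constructor
      · intro hπ
        exact ⟨Sym2.map (⇑π) e₀, SimpleGraph.mem_edgeFinset.mpr (autC_map_edge hπ he₀'),
          hπ, rfl⟩
      · rintro ⟨e, -, hπ, -⟩; exact hπ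
    rw [hsplit, Finset.card_biUnion ?_]
    · have hc' : ∀ e ∈ Gᶜ.edgeFinset, ((AutC G).filter
          (fun π : Equiv.Perm V => Sym2.map (⇑π) e₀ = e)).card = c :=
        fun e he => hcnt e₀ he₀' e (SimpleGraph.mem_edgeFinset.mp he)
      rw [Finset.sum_congr rfl hc', Finset.sum_const, smul_eq_mul]
    · intro e he e' he' hee
      refine Finset.disjoint_left.mpr fun π hπ hπ' => hee ?_
      rw [Finset.mem_filter] at hπ hπ'
      exact hπ.2.symm.trans hπ'.2
  -- the feasible solution
  set x : Finset (Sym2 V) → ℝ := fun E =>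
    (((AutC G).filter (fun π : Equiv.Perm V => E₀.image (Sym2.map ⇑π) = E)).card : ℝ)
      / ((c : ℝ) * B) with hx
  have hcB : (0:ℝ) < (c:ℝ) * B := mul_pos hcpos hBpos
  have hxnn : ∀ E, 0 ≤ x E := fun E => div_nonneg (Nat.cast_nonneg _) hcB.le
  have hxzero : ∀ E, ¬ IsHyperedge G E → x E = 0 := by
    intro E hE
    have : ((AutC G).filter (fun π : Equiv.Perm V => E₀.image (Sym2.map ⇑π) = E)) = ∅ := by
      refine Finset.filter_eq_empty_iff.mpr fun {π} hπ him => hE ?_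
      exact him ▸ hyperedge_image G π (mem_autC.mp hπ) E₀ hE₀
    rw [hx]; simp [this]
  have hfiber : ∀ e ∈ Gᶜ.edgeSet,
      ∑ E : Finset (Sym2 V), (if e ∈ E then
        (((AutC G).filter (fun π : Equiv.Perm V => E₀.image (Sym2.map ⇑π) = E)).card : ℕ)
        else 0) = B * c := by
    intro e he
    rw [← hcover e he]
    rw [Finset.card_eq_sum_card_fiberwise
      (f := fun π : Equiv.Perm V => E₀.image (Sym2.map ⇑π))
      (t := (Finset.univ : Finset (Finset (Sym2 V)))) (fun _ _ => Finset.mem_univ _)]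
    refine Finset.sum_congr rfl fun E _ => ?_
    rw [Finset.filter_filter]
    by_cases heE : e ∈ E
    · rw [if_pos heE]
      congr 1
      ext π
      simp only [Finset.mem_filter]
      constructor
      · exact fun hp => ⟨hp.1, by rw [hp.2]; exact heE, hp.2⟩
      · exact fun hp => ⟨hp.1, hp.2.2⟩
    · rw [if_neg heE]
      refine (Finset.card_eq_zero.mpr (Finset.filter_eq_empty_iff.mpr ?_)).symm
      intro π _ hp
      exact heE (hp.2 ▸ hp.1)
  have hxcover : ∀ e ∈ Gᶜ.edgeFinset,
      1 ≤ ∑ E : Finset (Sym2 V), if e ∈ E then x E else 0 := by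
    intro e he
    have he' := SimpleGraph.mem_edgeFinset.mp he
    have : ∀ E : Finset (Sym2 V), (if e ∈ E then x E else 0) =
        ((if e ∈ E then
          (((AutC G).filter (fun π : Equiv.Perm V => E₀.image (Sym2.map ⇑π) = E)).card : ℕ)
          else 0 : ℕ) : ℝ) / ((c : ℝ) * B) := by
      intro E
      by_cases heE : e ∈ E <;> simp [heE, hx]
    rw [Finset.sum_congr rfl fun E _ => this E, ← Finset.sum_div, ← Nat.cast_sum,
      hfiber e he']
    have hcast : ((B * c : ℕ) : ℝ) = (c : ℝ) * B := by push_cast; ring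
    rw [hcast, div_self hcB.ne']
  have hxtotal : ∑ E : Finset (Sym2 V), x E = (N : ℝ) / B := by
    have hsum : ∑ E : Finset (Sym2 V),
        (((AutC G).filter (fun π : Equiv.Perm V => E₀.image (Sym2.map ⇑π) = E)).card : ℕ)
        = (AutC G).card := by
      rw [Finset.card_eq_sum_card_fiberwise
        (f := fun π : Equiv.Perm V => E₀.image (Sym2.map ⇑π))
        (t := (Finset.univ : Finset (Finset (Sym2 V)))) (fun _ _ => Finset.mem_univ _)]
    rw [hx, ← Finset.sum_div, ← Nat.cast_sum, hsum, htotal]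
    push_cast
    field_simp
  have hmem : (N : ℝ) / B ∈ {r | ∃ x : Finset (Sym2 V) → ℝ, (∀ E, 0 ≤ x E) ∧
      (∀ E, ¬ IsHyperedge G E → x E = 0) ∧
      (∀ e ∈ Gᶜ.edgeFinset, 1 ≤ ∑ E : Finset (Sym2 V), if e ∈ E then x E else 0) ∧
      r = ∑ E : Finset (Sym2 V), x E} :=
    ⟨x, hxnn, hxzero, hxcover, hxtotal.symm⟩
  have hlower : ∀ r ∈ {r | ∃ x : Finset (Sym2 V) → ℝ, (∀ E, 0 ≤ x E) ∧
      (∀ E, ¬ IsHyperedge G E → x E = 0) ∧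
      (∀ e ∈ Gᶜ.edgeFinset, 1 ≤ ∑ E : Finset (Sym2 V), if e ∈ E then x E else 0) ∧
      r = ∑ E : Finset (Sym2 V), x E}, (N : ℝ) / B ≤ r := by
    rintro r ⟨y, hynn, hyzero, hycover, rfl⟩
    rw [div_le_iff₀ hBpos]
    have step1 : (N : ℝ) ≤ ∑ e ∈ Gᶜ.edgeFinset,
        ∑ E : Finset (Sym2 V), (if e ∈ E then y E else 0) := by
      calc (N : ℝ) = ∑ e ∈ Gᶜ.edgeFinset, (1:ℝ) := by
              simp [hN]
        _ ≤ _ := Finset.sum_le_sum fun e he => hycover e he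
    have step2 : ∑ e ∈ Gᶜ.edgeFinset, ∑ E : Finset (Sym2 V), (if e ∈ E then y E else 0)
        = ∑ E : Finset (Sym2 V), ((Gᶜ.edgeFinset.filter (· ∈ E)).card : ℝ) * y E := by
      rw [Finset.sum_comm]
      refine Finset.sum_congr rfl fun E _ => ?_
      rw [← Finset.sum_filter, Finset.sum_const, nsmul_eq_mul]
    have step3 : ∀ E : Finset (Sym2 V),
        ((Gᶜ.edgeFinset.filter (· ∈ E)).card : ℝ) * y E ≤ (B : ℝ) * y E := by
      intro E
      by_cases hE : IsHyperedge G E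
      · refine mul_le_mul_of_nonneg_right ?_ (hynn E)
        have h1 : (Gᶜ.edgeFinset.filter (· ∈ E)).card ≤ E.card :=
          Finset.card_le_card fun e he => (Finset.mem_filter.mp he).2
        have h2 : E.card ≤ B := le_csSup hbdd ⟨E, hE, rfl⟩
        exact_mod_cast le_trans h1 h2
      · rw [hyzero E hE, mul_zero, mul_zero]
    calc (N : ℝ) ≤ ∑ E : Finset (Sym2 V), ((Gᶜ.edgeFinset.filter (· ∈ E)).card : ℝ) * y E :=
          step1.trans_eq step2
      _ ≤ ∑ E : Finset (Sym2 V), (B : ℝ) * y E := Finset.sum_le_sum fun E _ => step3 E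
      _ = (∑ E : Finset (Sym2 V), y E) * B := by rw [← Finset.mul_sum]; ring
  have hbddbelow : BddBelow {r | ∃ x : Finset (Sym2 V) → ℝ, (∀ E, 0 ≤ x E) ∧
      (∀ E, ¬ IsHyperedge G E → x E = 0) ∧
      (∀ e ∈ Gᶜ.edgeFinset, 1 ≤ ∑ E : Finset (Sym2 V), if e ∈ E then x E else 0) ∧
      r = ∑ E : Finset (Sym2 V), x E} := ⟨(N : ℝ) / B, hlower⟩
  rw [fracBoxicity]
  exact le_antisymm (csInf_le hbddbelow hmem) (le_csInf ⟨_, hmem⟩ hlower)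
end

section
/- For any hypergraph H that is vertex-transitive, the fractional covering number of H equals |V(H)| divided by the maximum cardinality of a hyperedge of H. -/
open scoped Classical

/-- Scheinerman–Ullman, Proposition 1.3.4: the fractional covering number of a
vertex-transitive hypergraph equals `|V| / (maximum hyperedge size)`. -/
theorem fractional_covering_of_vertex_transitive {V : Type*} [Fintype V]
    [DecidableEq V] (E : Finset (Finset V))
    (hne : ∀ X ∈ E, X.Nonempty) (hcov : ∀ v : V, ∃ X ∈ E, v ∈ X)
    (hVT : ∀ u v : V, ∃ π : Equiv.Perm V,
      (∀ X : Finset V, X ∈ E ↔ X.image π ∈ E) ∧ π u = v) :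
    sInf {r : ℝ | ∃ x : Finset V → ℝ, (∀ X, 0 ≤ x X) ∧ (∀ X ∉ E, x X = 0) ∧
        (∀ v : V, 1 ≤ ∑ X ∈ E, if v ∈ X then x X else 0) ∧ r = ∑ X ∈ E, x X}
      = (Fintype.card V : ℝ) / ((sSup {m : ℕ | ∃ X ∈ E, X.card = m} : ℕ) : ℝ) := by
  classical
  set S : Set ℝ := {r : ℝ | ∃ x : Finset V → ℝ, (∀ X, 0 ≤ x X) ∧ (∀ X ∉ E, x X = 0) ∧
        (∀ v : V, 1 ≤ ∑ X ∈ E, if v ∈ X then x X else 0) ∧ r = ∑ X ∈ E, x X} with hS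
  set Mset : Set ℕ := {m : ℕ | ∃ X ∈ E, X.card = m} with hMsetdef
  set N : ℕ := Fintype.card V with hN
  set M : ℕ := sSup Mset with hMdef
  rcases isEmpty_or_nonempty V with hV | hV
  · -- Empty vertex set
    have h0 : (0:ℝ) ∈ S := by
      refine ⟨0, fun X => le_refl 0, fun X _ => rfl, fun v => (hV.elim v), by simp⟩
    have hlb : ∀ r ∈ S, (0:ℝ) ≤ r := by
      rintro r ⟨x, hx0, -, -, rfl⟩
      exact Finset.sum_nonneg fun X _ => hx0 X
    have hinf : sInf S = 0 := le_antisymm (csInf_le ⟨0, hlb⟩ h0) (le_csInf ⟨0, h0⟩ hlb)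
    have hcard : (N : ℝ) = 0 := by
      haveI := hV
      simp [hN]
    rw [hinf, hcard, zero_div]
  · obtain ⟨v₀⟩ := hV
    -- facts about M
    have hMne : Mset.Nonempty := by
      obtain ⟨X, hX, -⟩ := hcov v₀
      exact ⟨X.card, X, hX, rfl⟩
    have hMbdd : BddAbove Mset := by
      refine ⟨N, ?_⟩
      rintro m ⟨X, hX, rfl⟩
      exact le_trans (Finset.card_le_univ X) (le_of_eq Finset.card_univ)
    obtain ⟨Y, hYE, hYcard⟩ : ∃ X ∈ E, X.card = M := Nat.sSup_mem hMne hMbdd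
    have hMpos : 0 < M := by
      obtain ⟨v, hv⟩ := hne Y hYE
      rw [← hYcard]
      exact Finset.card_pos.mpr ⟨v, hv⟩
    have hMle : ∀ X ∈ E, X.card ≤ M := fun X hX => le_csSup hMbdd ⟨X, hX, rfl⟩
    have hNpos : 0 < N := Fintype.card_pos_iff.mpr ⟨v₀⟩
    -- the automorphism group as a finset
    set P : Finset (Equiv.Perm V) :=
      Finset.univ.filter (fun π : Equiv.Perm V => ∀ X : Finset V, X ∈ E ↔ X.image π ∈ E)
      with hPdef
    have memP : ∀ π : Equiv.Perm V, π ∈ P ↔ ∀ X : Finset V, X ∈ E ↔ X.image π ∈ E := by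
      intro π; simp [hPdef]
    have hPone : (1 : Equiv.Perm V) ∈ P := by
      rw [memP]; intro X; simp
    have hPmul : ∀ σ π : Equiv.Perm V, σ ∈ P → π ∈ P → σ * π ∈ P := by
      intro σ π hσ hπ
      rw [memP] at hσ hπ ⊢
      intro X
      have : X.image (⇑(σ * π)) = (X.image π).image σ := by
        rw [Finset.image_image]; rfl
      rw [this]
      exact (hπ X).trans (hσ (X.image π))
    have htrans : ∀ u v : V, ∃ π ∈ P, π u = v := by
      intro u v
      obtain ⟨π, hπ1, hπ2⟩ := hVT u v
      exact ⟨π, (memP π).mpr hπ1, hπ2⟩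
    have hPpos : 0 < P.card := Finset.card_pos.mpr ⟨1, hPone⟩
    -- fibers have constant cardinality
    have fibconst : ∀ (u v w : V),
        (P.filter fun π => π u = v).card = (P.filter fun π => π u = w).card := by
      intro u v w
      obtain ⟨σ, hσP, hσ⟩ := htrans v w
      refine Finset.card_bij' (fun π _ => σ * π) (fun π _ => σ⁻¹ * π) ?_ ?_ ?_ ?_
      · intro π hπ
        rw [Finset.mem_filter] at hπ ⊢
        refine ⟨hPmul σ π hσP hπ.1, ?_⟩
        simp [hπ.2, hσ]
      · intro π hπ
        rw [Finset.mem_filter] at hπ ⊢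
        have hσinv : σ⁻¹ ∈ P := by
          rw [memP] at hσP ⊢
          intro X
          have h1 := hσP (X.image (σ⁻¹ : Equiv.Perm V))
          have h2 : ((X.image (σ⁻¹ : Equiv.Perm V)).image σ) = X := by
            rw [Finset.image_image]
            have : (⇑σ ∘ ⇑(σ⁻¹ : Equiv.Perm V)) = id := by
              funext a; simp
            rw [this, Finset.image_id]
          rw [h2] at h1
          exact h1.symm
        refine ⟨hPmul σ⁻¹ π hσinv hπ.1, ?_⟩
        have : σ⁻¹ (π u) = σ⁻¹ w := by rw [hπ.2]
        simpa [← hσ] using this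
      · intro π hπ; simp [mul_assoc, ← mul_assoc]
      · intro π hπ; simp [mul_assoc, ← mul_assoc]
    have hfib : ∀ u v : V, N * (P.filter fun π => π u = v).card = P.card := by
      intro u v
      have h1 : P.card = ∑ w : V, (P.filter fun π => π u = w).card :=
        Finset.card_eq_sum_card_fiberwise (fun π _ => Finset.mem_univ (π u))
      rw [h1, Finset.sum_congr rfl (fun w _ => fibconst u w v)]
      simp [Finset.sum_const, mul_comm, hN]
    -- counting permutations covering v
    have claim2 : ∀ v : V, (P.filter fun π : Equiv.Perm V => v ∈ Y.image ⇑π).card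
        = ∑ u ∈ Y, (P.filter fun π => π u = v).card := by
      intro v
      have h1 : (P.filter fun π : Equiv.Perm V => v ∈ Y.image ⇑π).card
          = ∑ u ∈ Y, ((P.filter fun π : Equiv.Perm V => v ∈ Y.image ⇑π).filter
              (fun π => (π : Equiv.Perm V)⁻¹ v = u)).card := by
        refine Finset.card_eq_sum_card_fiberwise ?_
        intro π hπ
        rw [Finset.mem_coe, Finset.mem_filter] at hπ
        obtain ⟨u, hu, huv⟩ := Finset.mem_image.mp hπ.2
        have : (π : Equiv.Perm V)⁻¹ v = u := by
          rw [← huv]; simp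
        show π⁻¹ v ∈ (Y : Set V)
        rw [this]; exact hu
      rw [h1]
      refine Finset.sum_congr rfl ?_
      intro u hu
      congr 1
      ext π
      simp only [Finset.mem_filter, Finset.filter_filter, and_assoc]
      constructor
      · rintro ⟨hP, -, h2⟩
        refine ⟨hP, ?_⟩
        have : π ((π : Equiv.Perm V)⁻¹ v) = π u := by rw [h2]
        simpa using this.symm
      · rintro ⟨hP, h2⟩
        refine ⟨hP, ?_, ?_⟩
        · exact Finset.mem_image.mpr ⟨u, hu, h2⟩
        · rw [← h2]; simp
    have claim1 : ∀ v : V, ∑ X ∈ E, (if v ∈ X then (P.filter fun π : Equiv.Perm V => Y.image ⇑π = X).card else 0)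
        = (P.filter fun π : Equiv.Perm V => v ∈ Y.image ⇑π).card := by
      intro v
      have h1 : (P.filter fun π : Equiv.Perm V => v ∈ Y.image ⇑π).card
          = ∑ X ∈ E, ((P.filter fun π : Equiv.Perm V => v ∈ Y.image ⇑π).filter
              (fun π : Equiv.Perm V => Y.image ⇑π = X)).card := by
        refine Finset.card_eq_sum_card_fiberwise ?_
        intro π hπ
        rw [Finset.mem_coe, Finset.mem_filter] at hπ
        exact ((memP π).mp hπ.1 Y).mp hYE
      rw [h1]
      refine Finset.sum_congr rfl ?_
      intro X hX
      by_cases hvX : v ∈ X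
      · rw [if_pos hvX]
        symm
        rw [Finset.filter_filter]
        congr 1
        exact Finset.filter_congr fun π _ =>
          ⟨fun h => h.2, fun h2 => ⟨by rw [h2]; exact hvX, h2⟩⟩
      · rw [if_neg hvX]
        symm
        rw [Finset.card_eq_zero, Finset.filter_eq_empty_iff]
        rintro π hπ h2
        rw [Finset.mem_filter] at hπ
        exact hvX (h2 ▸ hπ.2)
    have claim3 : ∑ X ∈ E, (P.filter fun π : Equiv.Perm V => Y.image ⇑π = X).card = P.card := by
      symm
      refine Finset.card_eq_sum_card_fiberwise ?_
      intro π hπ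
      exact ((memP π).mp hπ Y).mp hYE
    -- the optimal fractional cover
    set c : ℝ := (N : ℝ) / ((P.card : ℝ) * (M : ℝ)) with hc
    have hcnonneg : 0 ≤ c :=
      div_nonneg (Nat.cast_nonneg _) (mul_nonneg (Nat.cast_nonneg _) (Nat.cast_nonneg _))
    have hPM : ((P.card : ℝ) * (M : ℝ)) ≠ 0 :=
      mul_ne_zero (Nat.cast_ne_zero.mpr hPpos.ne') (Nat.cast_ne_zero.mpr hMpos.ne')
    have hmem : (N : ℝ) / (M : ℝ) ∈ S := by
      refine ⟨fun X => ((P.filter fun π : Equiv.Perm V => Y.image ⇑π = X).card : ℝ) * c, ?_, ?_, ?_, ?_⟩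
      · intro X; exact mul_nonneg (Nat.cast_nonneg _) hcnonneg
      · intro X hX
        have : (P.filter fun π : Equiv.Perm V => Y.image ⇑π = X) = ∅ := by
          rw [Finset.filter_eq_empty_iff]
          intro π hπ hYX
          exact hX (hYX ▸ ((memP π).mp hπ Y).mp hYE)
        simp [this]
      · intro v
        have hA : ∑ X ∈ E, (if v ∈ X then
            (((P.filter fun π : Equiv.Perm V => Y.image ⇑π = X).card : ℝ) * c) else 0)
            = ((P.filter fun π : Equiv.Perm V => v ∈ Y.image ⇑π).card : ℝ) * c := by
          rw [← claim1 v]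
          push_cast
          rw [Finset.sum_mul]
          refine Finset.sum_congr rfl fun X _ => ?_
          split <;> simp
        rw [hA]
        have key : (N : ℕ) * (P.filter fun π : Equiv.Perm V => v ∈ Y.image ⇑π).card = M * P.card := by
          rw [claim2 v, Finset.mul_sum,
            Finset.sum_congr rfl (fun u _ => hfib u v), Finset.sum_const,
            smul_eq_mul, hYcard]
        have keyR : ((P.filter fun π : Equiv.Perm V => v ∈ Y.image ⇑π).card : ℝ) * (N : ℝ)
            = (M : ℝ) * (P.card : ℝ) := by
          have h := congrArg (fun n : ℕ => (n : ℝ)) key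
          push_cast at h
          linarith
        have : ((P.filter fun π : Equiv.Perm V => v ∈ Y.image ⇑π).card : ℝ) * c = 1 := by
          rw [hc, mul_div_assoc', div_eq_one_iff_eq hPM]
          calc ((P.filter fun π : Equiv.Perm V => v ∈ Y.image ⇑π).card : ℝ) * (N : ℝ)
              = (M : ℝ) * (P.card : ℝ) := keyR
            _ = (P.card : ℝ) * (M : ℝ) := by ring
        rw [this]
      · have h1 : ∑ X ∈ E, (((P.filter fun π : Equiv.Perm V => Y.image ⇑π = X).card : ℝ) * c)
            = ((P.card : ℝ)) * c := by
          rw [← Finset.sum_mul]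
          congr 1
          exact_mod_cast congrArg (Nat.cast (R := ℝ)) claim3
        rw [h1, hc]
        rw [mul_div_assoc', mul_div_mul_left _ _ (Nat.cast_ne_zero.mpr hPpos.ne')]
    -- lower bound
    have hlb : ∀ r ∈ S, (N : ℝ) / (M : ℝ) ≤ r := by
      rintro r ⟨x, hx0, hxE, hxcov, rfl⟩
      have h1 : (N : ℝ) ≤ (M : ℝ) * ∑ X ∈ E, x X := by
        calc (N : ℝ) = ∑ _v : V, (1 : ℝ) := by simp [hN]
          _ ≤ ∑ v : V, ∑ X ∈ E, (if v ∈ X then x X else 0) :=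
              Finset.sum_le_sum fun v _ => hxcov v
          _ = ∑ X ∈ E, ∑ v : V, (if v ∈ X then x X else 0) := Finset.sum_comm
          _ = ∑ X ∈ E, (X.card : ℝ) * x X := by
              refine Finset.sum_congr rfl fun X _ => ?_
              rw [Finset.sum_ite_mem, Finset.univ_inter, Finset.sum_const,
                nsmul_eq_mul]
          _ ≤ ∑ X ∈ E, (M : ℝ) * x X := by
              refine Finset.sum_le_sum fun X hX => ?_
              exact mul_le_mul_of_nonneg_right (by exact_mod_cast hMle X hX) (hx0 X)
          _ = (M : ℝ) * ∑ X ∈ E, x X := by rw [Finset.mul_sum]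
      rw [div_le_iff₀ (by exact_mod_cast hMpos)]
      calc (N : ℝ) ≤ (M : ℝ) * ∑ X ∈ E, x X := h1
        _ = (∑ X ∈ E, x X) * (M : ℝ) := by ring
    exact le_antisymm (csInf_le ⟨(N : ℝ) / (M : ℝ), hlb⟩ hmem)
      (le_csInf ⟨_, hmem⟩ hlb)
end

section
/- Let G = K_{n_1,...,n_k} be the complete k-partite graph with all parts of size at least 2 (so box(G) = k). Then for every positive integer s, the s-fold boxicity satisfies box_s(G) = s·k. -/
open scoped Classical

section BoxSAux

lemma sum_countP_le_card {α : Type*} {ι : Type*} (t : Finset ι) (C : Multiset α)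
    (p : ι → α → Prop)
    (hd : ∀ a ∈ C, ∀ i ∈ t, ∀ j ∈ t, p i a → p j a → i = j) :
    ∑ i ∈ t, C.countP (p i) ≤ Multiset.card C := by
  induction C using Multiset.induction with
  | empty => simp
  | cons x C ih =>
    have h1 : ∑ i ∈ t, C.countP (p i) ≤ Multiset.card C :=
      ih (fun a ha => hd a (Multiset.mem_cons_of_mem ha))
    have h2 : ∑ i ∈ t, (if p i x then (1:ℕ) else 0) ≤ 1 := by
      have hx := hd x (Multiset.mem_cons_self x C)
      calc ∑ i ∈ t, (if p i x then (1:ℕ) else 0)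
          = (t.filter (fun i => p i x)).card := (Finset.card_filter _ _).symm
        _ ≤ 1 := Finset.card_le_one.mpr (fun i hi j hj => by
            rw [Finset.mem_filter] at hi hj
            exact hx i hi.1 j hj.1 hi.2 hj.2)
    calc ∑ i ∈ t, (x ::ₘ C).countP (p i)
        = ∑ i ∈ t, (C.countP (p i) + if p i x then 1 else 0) := by
          simp [Multiset.countP_cons]
      _ = (∑ i ∈ t, C.countP (p i)) + ∑ i ∈ t, (if p i x then (1:ℕ) else 0) :=
          Finset.sum_add_distrib
      _ ≤ Multiset.card C + 1 := Nat.add_le_add h1 h2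
      _ = Multiset.card (x ::ₘ C) := (Multiset.card_cons x C).symm

lemma countP_finset_sum {ι α : Type*} (t : Finset ι) (f : ι → Multiset α)
    (p : α → Prop) :
    (∑ i ∈ t, f i).countP p = ∑ i ∈ t, (f i).countP p := by
  induction t using Finset.induction with
  | empty => simp
  | @insert a s h ih => rw [Finset.sum_insert h, Finset.sum_insert h,
      Multiset.countP_add, ih]

lemma countP_replicate {α : Type*} (p : α → Prop) [DecidablePred p] (m : ℕ) (a : α) :
    (Multiset.replicate m a).countP p = if p a then m else 0 := by
  induction m with
  | zero => simp
  | succ m ih => rw [Multiset.replicate_succ, Multiset.countP_cons, ih]; split <;> simp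

lemma card_finset_sum {ι α : Type*} (t : Finset ι) (f : ι → Multiset α) :
    Multiset.card (∑ i ∈ t, f i) = ∑ i ∈ t, Multiset.card (f i) := by
  induction t using Finset.induction with
  | empty => simp
  | @insert a s h ih => rw [Finset.sum_insert h, Finset.sum_insert h,
      Multiset.card_add, ih]

lemma interval_C4 {a1 a2 b1 b2 c1 c2 d1 d2 : ℝ}
    (hab : ¬ max a1 b1 ≤ min a2 b2) (hcd : ¬ max c1 d1 ≤ min c2 d2)
    (hac : max a1 c1 ≤ min a2 c2) (had : max a1 d1 ≤ min a2 d2)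
    (hbc : max b1 c1 ≤ min b2 c2) (hbd : max b1 d1 ≤ min b2 d2) : False := by
  simp only [max_le_iff, le_min_iff] at hac had hbc hbd
  obtain ⟨⟨hac1, hac2⟩, hac3, hac4⟩ := hac
  obtain ⟨⟨had1, had2⟩, had3, had4⟩ := had
  obtain ⟨⟨hbc1, hbc2⟩, hbc3, hbc4⟩ := hbc
  obtain ⟨⟨hbd1, hbd2⟩, hbd3, hbd4⟩ := hbd
  rw [not_le] at hab hcd
  rcases lt_max_iff.mp hab with h | h <;> rcases min_lt_iff.mp h with h1 | h1 <;>
    rcases lt_max_iff.mp hcd with h' | h' <;> rcases min_lt_iff.mp h' with h2 | h2 <;>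
    linarith

lemma cm_compl_adj {k : ℕ} {n : Fin k → ℕ} (u v : Σ i : Fin k, Fin (n i)) :
    (completeMultipartite k n)ᶜ.Adj u v ↔ u ≠ v ∧ u.1 = v.1 := by
  simp only [completeMultipartite, SimpleGraph.compl_adj, SimpleGraph.fromRel_adj]
  tauto

lemma no_two_parts {k : ℕ} {n : Fin k → ℕ}
    {H : SimpleGraph (Σ i : Fin k, Fin (n i))}
    (hle : H ≤ (completeMultipartite k n)ᶜ) (hco : IsCointerval H)
    {a b c d : Σ i : Fin k, Fin (n i)}
    (hab : H.Adj a b) (hcd : H.Adj c d)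
    (hac : a.1 ≠ c.1) (hab1 : a.1 = b.1) (hcd1 : c.1 = d.1) : False := by
  obtain ⟨f, _hf1, hf2⟩ := hco
  have cross : ∀ u v : (Σ i : Fin k, Fin (n i)), u.1 ≠ v.1 →
      max (f u).1 (f v).1 ≤ min (f u).2 (f v).2 := by
    intro u v huv
    have hne : u ≠ v := fun h => huv (by rw [h])
    have hadj : Hᶜ.Adj u v := by
      rw [SimpleGraph.compl_adj]
      exact ⟨hne, fun h => huv ((cm_compl_adj u v).mp (hle h)).2⟩
    exact (hf2 u v hne).mp hadj
  have nab : ¬ max (f a).1 (f b).1 ≤ min (f a).2 (f b).2 := by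
    intro h
    have := (hf2 a b hab.ne).mpr h
    rw [SimpleGraph.compl_adj] at this
    exact this.2 hab
  have ncd : ¬ max (f c).1 (f d).1 ≤ min (f c).2 (f d).2 := by
    intro h
    have := (hf2 c d hcd.ne).mpr h
    rw [SimpleGraph.compl_adj] at this
    exact this.2 hcd
  exact interval_C4 nab ncd (cross a c hac)
    (cross a d (fun h => hac (h.trans hcd1.symm)))
    (cross b c (fun h => hac (hab1.trans h)))
    (cross b d (fun h => hac ((hab1.trans h).trans hcd1.symm)))

def partClique (k : ℕ) (n : Fin k → ℕ) (i : Fin k) :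
    SimpleGraph (Σ j : Fin k, Fin (n j)) :=
  SimpleGraph.fromRel (fun a b => a.1 = i ∧ b.1 = i)

lemma partClique_adj {k : ℕ} {n : Fin k → ℕ} (i : Fin k)
    (u v : Σ j : Fin k, Fin (n j)) :
    (partClique k n i).Adj u v ↔ u ≠ v ∧ u.1 = i ∧ v.1 = i := by
  simp only [partClique, SimpleGraph.fromRel_adj]
  tauto

lemma partClique_le {k : ℕ} {n : Fin k → ℕ} (i : Fin k) :
    partClique k n i ≤ (completeMultipartite k n)ᶜ := by
  intro u v h
  rw [partClique_adj] at h
  rw [cm_compl_adj]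
  exact ⟨h.1, h.2.1.trans h.2.2.symm⟩

lemma neg_one_le_nat' (m : ℕ) : (-1:ℝ) ≤ (m:ℝ) :=
  le_trans (by norm_num) (Nat.cast_nonneg m)

lemma partClique_cointerval {k : ℕ} {n : Fin k → ℕ} (i : Fin k) :
    IsCointerval (partClique k n i) := by
  refine ⟨fun v => if v.1 = i then ((v.2.val : ℝ), (v.2.val : ℝ))
    else (-1, (n i : ℝ)), ?_, ?_⟩
  · intro v
    by_cases h : v.1 = i <;> simp [h]
    have : (0:ℝ) ≤ (n i : ℝ) := Nat.cast_nonneg _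
    linarith
  · intro u v huv
    rw [SimpleGraph.compl_adj, partClique_adj]
    by_cases hu : u.1 = i <;> by_cases hv : v.1 = i
    · simp only [hu, hv, if_true, reduceIte]
      constructor
      · rintro ⟨h1, h2⟩
        exact absurd ⟨h1, trivial, trivial⟩ h2
      · intro h
        exfalso
        have h1 : (u.snd.val:ℝ) ≤ v.snd.val :=
          le_trans (le_max_left _ _) (h.trans (min_le_right _ _))
        have h2 : (v.snd.val:ℝ) ≤ u.snd.val :=
          le_trans (le_max_right _ _) (h.trans (min_le_left _ _))
        have hval : u.snd.val = v.snd.val := by exact_mod_cast le_antisymm h1 h2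
        apply huv
        obtain ⟨ui, u2⟩ := u
        obtain ⟨vi, v2⟩ := v
        dsimp at hu hv hval
        subst hu; subst hv
        exact congrArg _ (Fin.ext hval)
    · simp only [hu, hv, if_true, reduceIte]
      simp [hu, hv, huv]
      have h1 : u.snd.val < n i := hu ▸ u.snd.isLt
      refine ⟨neg_one_le_nat' u.snd.val, ?_, neg_one_le_nat' (n i)⟩
      exact_mod_cast h1.le
    · simp only [hu, hv, if_true, reduceIte]
      simp [hu, hv, huv]
      have h1 : v.snd.val < n i := hv ▸ v.snd.isLt
      refine ⟨⟨neg_one_le_nat' (n i), ?_⟩, neg_one_le_nat' v.snd.val⟩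
      exact_mod_cast h1.le
    · simp [hu, hv, huv]
      exact neg_one_le_nat' (n i)

end BoxSAux

/-- For a complete multipartite graph with all parts of size at least two, the
`s`-fold boxicity equals `s·k`. -/
theorem boxS_completeMultipartite (k : ℕ) (n : Fin k → ℕ) (hn : ∀ i, 2 ≤ n i)
    (s : ℕ) (hs : 1 ≤ s) :
    boxS (completeMultipartite k n) s = s * k := by
  classical
  have hmem : s * k ∈ {m | ∃ C : Multiset (SimpleGraph (Σ i : Fin k, Fin (n i))),
      Multiset.card C = m ∧
      (∀ H ∈ C, H ≤ (completeMultipartite k n)ᶜ ∧ IsCointerval H) ∧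
      ∀ e ∈ (completeMultipartite k n)ᶜ.edgeSet,
        s ≤ Multiset.countP (fun H => e ∈ H.edgeSet) C} := by
    refine ⟨∑ i : Fin k, Multiset.replicate s (partClique k n i), ?_, ?_, ?_⟩
    · rw [card_finset_sum]
      simp [Multiset.card_replicate, mul_comm]
    · intro H hH
      rw [Multiset.mem_sum] at hH
      obtain ⟨i, _, hi⟩ := hH
      rw [Multiset.eq_of_mem_replicate hi]
      exact ⟨partClique_le i, partClique_cointerval i⟩
    · intro e he
      induction e using Sym2.ind with
      | _ u v =>
        rw [SimpleGraph.mem_edgeSet, cm_compl_adj] at he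
        obtain ⟨hne, heq⟩ := he
        erw [countP_finset_sum]
        have hterm : s ≤ (Multiset.replicate s (partClique k n u.1)).countP
            (fun H => s(u, v) ∈ H.edgeSet) := by
          rw [countP_replicate, if_pos]
          rw [SimpleGraph.mem_edgeSet, partClique_adj]
          exact ⟨hne, rfl, heq.symm⟩
        exact le_trans hterm (Finset.single_le_sum
          (f := fun i => (Multiset.replicate s (partClique k n i)).countP
            (fun H => s(u, v) ∈ H.edgeSet))
          (fun i _ => Nat.zero_le _) (Finset.mem_univ u.1))
  unfold boxS
  apply le_antisymm
  · exact Nat.sInf_le hmem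
  · refine le_csInf ⟨_, hmem⟩ ?_
    rintro m ⟨C, hcard, hmemC, hcover⟩
    have h0 : ∀ i : Fin k, (0:ℕ) < n i := fun i => lt_of_lt_of_le (by norm_num) (hn i)
    have h1 : ∀ i : Fin k, (1:ℕ) < n i := fun i => lt_of_lt_of_le (by norm_num) (hn i)
    have key : ∑ i : Fin k, C.countP
        (fun H => s((⟨i, ⟨0, h0 i⟩⟩ : Σ j : Fin k, Fin (n j)), ⟨i, ⟨1, h1 i⟩⟩) ∈ H.edgeSet)
        ≤ Multiset.card C := by
      apply sum_countP_le_card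
      intro H hH i _ j _ hpi hpj
      by_contra hij
      obtain ⟨hle, hco⟩ := hmemC H hH
      rw [SimpleGraph.mem_edgeSet] at hpi hpj
      exact no_two_parts hle hco hpi hpj
        (show (⟨i, ⟨0, h0 i⟩⟩ : Σ j : Fin k, Fin (n j)).1 ≠ (⟨j, ⟨0, h0 j⟩⟩ : Σ j : Fin k, Fin (n j)).1 from hij)
        rfl rfl
    have h2 : ∀ i : Fin k, s ≤ C.countP
        (fun H => s((⟨i, ⟨0, h0 i⟩⟩ : Σ j : Fin k, Fin (n j)), ⟨i, ⟨1, h1 i⟩⟩) ∈ H.edgeSet) := by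
      intro i
      apply hcover
      rw [SimpleGraph.mem_edgeSet, cm_compl_adj]
      refine ⟨?_, rfl⟩
      intro h
      rw [Sigma.mk.inj_iff] at h
      have h2 : (⟨0, h0 i⟩ : Fin (n i)) = ⟨1, h1 i⟩ := eq_of_heq h.2
      rw [Fin.mk.injEq] at h2
      omega
    calc s * k = ∑ _i : Fin k, s := by simp [mul_comm]
      _ ≤ _ := Finset.sum_le_sum (fun i _ => h2 i)
      _ ≤ Multiset.card C := key
      _ = m := hcard
end

section
/- The maximum number of edges of a cointerval subgraph of a disjoint union of cliques K_{n_1} ∪ ... ∪ K_{n_k} (with n_1 ≥ n_i for all i) is C(n_1, 2). -/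
open scoped Classical

lemma four_intervals (a1 a2 b1 b2 c1 c2 d1 d2 : ℝ)
    (ha : a1 ≤ a2) (hb : b1 ≤ b2) (hc : c1 ≤ c2) (hd : d1 ≤ d2)
    (hab : ¬ (max a1 b1 ≤ min a2 b2)) (hcd : ¬ (max c1 d1 ≤ min c2 d2))
    (hac : max a1 c1 ≤ min a2 c2) (had : max a1 d1 ≤ min a2 d2)
    (hbc : max b1 c1 ≤ min b2 c2) (hbd : max b1 d1 ≤ min b2 d2) : False := by
  simp only [max_le_iff, le_min_iff] at hac had hbc hbd
  have hab' : b2 < a1 ∨ a2 < b1 := by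
    rcases lt_max_iff.mp (not_le.mp hab) with h | h <;>
      rcases min_lt_iff.mp h with h' | h'
    · linarith
    · exact Or.inl h'
    · exact Or.inr h'
    · linarith
  have hcd' : d2 < c1 ∨ c2 < d1 := by
    rcases lt_max_iff.mp (not_le.mp hcd) with h | h <;>
      rcases min_lt_iff.mp h with h' | h'
    · linarith
    · exact Or.inl h'
    · exact Or.inr h'
    · linarith
  obtain ⟨⟨_, hac1⟩, hac2, _⟩ := hac
  obtain ⟨⟨_, had1⟩, had2, _⟩ := had
  obtain ⟨⟨_, hbc1⟩, hbc2, _⟩ := hbc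
  obtain ⟨⟨_, hbd1⟩, hbd2, _⟩ := hbd
  rcases hab' with h1 | h1 <;> rcases hcd' with h2 | h2 <;> linarith

lemma adj_fst_eq {k : ℕ} {n : Fin k → ℕ} {H : SimpleGraph (Σ i : Fin k, Fin (n i))}
    (hle : H ≤ cliqueUnion k n) {a b : Σ i : Fin k, Fin (n i)}
    (h : H.Adj a b) : a.1 = b.1 := by
  have h2 := hle h
  rw [cliqueUnion, SimpleGraph.fromRel_adj] at h2
  rcases h2.2 with h' | h'
  · exact h'
  · exact h'.symm

lemma edges_same_part {k : ℕ} {n : Fin k → ℕ} {H : SimpleGraph (Σ i : Fin k, Fin (n i))}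
    (hle : H ≤ cliqueUnion k n) (hco : IsCointerval H)
    {a b c d : Σ i : Fin k, Fin (n i)}
    (hab : H.Adj a b) (hcd : H.Adj c d) : a.1 = c.1 := by
  by_contra hne
  obtain ⟨f, hf1, hf2⟩ := hco
  have hab1 : a.1 = b.1 := adj_fst_eq hle hab
  have hcd1 : c.1 = d.1 := adj_fst_eq hle hcd
  have cross : ∀ u v : Σ i : Fin k, Fin (n i), u.1 ≠ v.1 →
      max (f u).1 (f v).1 ≤ min (f u).2 (f v).2 := by
    intro u v huv
    have hne' : u ≠ v := fun h => huv (by rw [h])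
    exact (hf2 u v hne').mp ⟨hne', fun h => huv (adj_fst_eq hle h)⟩
  have hnab : ¬ (max (f a).1 (f b).1 ≤ min (f a).2 (f b).2) :=
    fun hm => ((hf2 a b hab.ne).mpr hm).2 hab
  have hncd : ¬ (max (f c).1 (f d).1 ≤ min (f c).2 (f d).2) :=
    fun hm => ((hf2 c d hcd.ne).mpr hm).2 hcd
  exact four_intervals (f a).1 (f a).2 (f b).1 (f b).2 (f c).1 (f c).2 (f d).1 (f d).2
    (hf1 a) (hf1 b) (hf1 c) (hf1 d) hnab hncd
    (cross a c hne) (cross a d (hcd1 ▸ hne))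
    (cross b c (hab1 ▸ hne)) (cross b d (fun h => hne (hab1.trans (h.trans hcd1.symm))))

/-- the embedding of part `i` -/
def partEmb {k : ℕ} (n : Fin k → ℕ) (i : Fin k) :
    Fin (n i) ↪ Σ j : Fin k, Fin (n j) :=
  ⟨fun x => ⟨i, x⟩, fun x y h => by simpa using h⟩

lemma edgeSet_map' {V W : Type*} (f : V ↪ W) (G : SimpleGraph V) :
    (G.map f).edgeSet = Sym2.map f '' G.edgeSet := by
  ext e
  induction e with
  | _ u v =>
    simp only [SimpleGraph.mem_edgeSet, SimpleGraph.map_adj, Set.mem_image]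
    constructor
    · rintro ⟨x, y, h, rfl, rfl⟩
      exact ⟨s(x, y), by simpa using h, rfl⟩
    · rintro ⟨e', he', heq⟩
      induction e' with
      | _ x y =>
        rw [Sym2.map_pair_eq, Sym2.eq_iff] at heq
        have hxy : G.Adj x y := by simpa using he'
        rcases heq with ⟨rfl, rfl⟩ | ⟨rfl, rfl⟩
        · exact ⟨x, y, hxy, rfl, rfl⟩
        · exact ⟨y, x, hxy.symm, rfl, rfl⟩

lemma ncard_edgeSet_map {V W : Type*} (f : V ↪ W) (G : SimpleGraph V) :
    (G.map f).edgeSet.ncard = G.edgeSet.ncard := by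
  rw [edgeSet_map', Set.ncard_image_of_injective _ (Sym2.map.injective f.injective)]

lemma card_eq_ncard {V : Type*} [Fintype V] (G : SimpleGraph V) [Fintype G.edgeSet] :
    G.edgeFinset.card = G.edgeSet.ncard := by
  rw [SimpleGraph.edgeFinset, Set.ncard_eq_toFinset_card']

lemma ncard_top (m : ℕ) : (⊤ : SimpleGraph (Fin m)).edgeSet.ncard = m.choose 2 := by
  rw [← card_eq_ncard, SimpleGraph.card_edgeFinset_top_eq_card_choose_two, Fintype.card_fin]


/-- The maximum number of edges of a cointerval subgraph of a disjoint union of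
cliques is attained by a largest clique and equals `C(n₁, 2)`. -/
theorem max_cointerval_subgraph_of_cliqueUnion (k : ℕ) (hk : 0 < k)
    (n : Fin k → ℕ) (hmax : ∀ i, n i ≤ n ⟨0, hk⟩) :
    IsGreatest {m : ℕ | ∃ H : SimpleGraph (Σ i : Fin k, Fin (n i)),
        H ≤ cliqueUnion k n ∧ IsCointerval H ∧ H.edgeFinset.card = m}
      ((n ⟨0, hk⟩).choose 2) := by
  set i0 : Fin k := ⟨0, hk⟩ with hi0
  constructor
  · -- membership: the clique on part i0
    refine ⟨(⊤ : SimpleGraph (Fin (n i0))).map (partEmb n i0), ?_, ?_, ?_⟩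
    · rintro ⟨u1, u2⟩ ⟨v1, v2⟩ ⟨-, x, y, hxy, hx, hy⟩
      rw [cliqueUnion, SimpleGraph.fromRel_adj]
      refine ⟨?_, Or.inl ?_⟩
      · rw [← hx, ← hy]
        simp only [partEmb, Function.Embedding.coeFn_mk, ne_eq, Sigma.mk.inj_iff,
          heq_eq_eq, true_and]
        exact fun h => hxy.ne ((partEmb n i0).injective h)
      · rw [← hx, ← hy]
        rfl
    · -- cointerval
      refine ⟨fun v => if v.1 = i0 then ((v.2 : ℝ), (v.2 : ℝ)) else (-1, (n i0 : ℝ)), ?_, ?_⟩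
      · intro v
        by_cases h : v.1 = i0 <;> simp [h]
        have : (0 : ℝ) ≤ n i0 := Nat.cast_nonneg _
        linarith
      · intro u v huv
        have hadj : ((⊤ : SimpleGraph (Fin (n i0))).map (partEmb n i0)).Adj u v ↔
            (u.1 = i0 ∧ v.1 = i0) := by
          constructor
          · rintro ⟨-, x, y, hxy, rfl, rfl⟩
            exact ⟨rfl, rfl⟩
          · rintro ⟨hu, hv⟩
            obtain ⟨u1, u2⟩ := u
            obtain ⟨v1, v2⟩ := v
            dsimp at hu hv
            subst hu; subst hv
            refine ⟨huv, u2, v2, ?_, rfl, rfl⟩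
            simp only [SimpleGraph.top_adj]
            exact fun h => huv (by rw [h])
        rw [SimpleGraph.compl_adj, hadj]
        dsimp only
        split_ifs with hu hv hv
        · -- both in i0: not adjacent in compl, intervals are distinct points
          dsimp only
          constructor
          · rintro ⟨-, hn⟩
            exact absurd ⟨hu, hv⟩ hn
          · intro hm
            exfalso
            simp only [max_le_iff, le_min_iff] at hm
            have hval : (u.2 : ℕ) = (v.2 : ℕ) := by
              exact_mod_cast le_antisymm hm.2.1 hm.1.2
            exact huv (Sigma.ext (hu.trans hv.symm)
              ((Fin.heq_ext_iff (by rw [hu, hv])).mpr hval))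
        · dsimp only
          have h1 : ((u.2 : ℕ) : ℝ) ≤ (n i0 : ℝ) := by
            have h := u.2.is_lt
            have h' : n u.1 = n i0 := congrArg n hu
            exact_mod_cast le_of_lt (lt_of_lt_of_le h (le_of_eq h'))
          have h0 : (0 : ℝ) ≤ ((u.2 : ℕ) : ℝ) := Nat.cast_nonneg _
          constructor
          · intro _
            simp only [max_le_iff, le_min_iff]
            refine ⟨⟨?_, ?_⟩, ?_, ?_⟩ <;> linarith
          · intro _
            exact ⟨huv, fun h => hv h.2⟩
        · dsimp only
          have h1 : ((v.2 : ℕ) : ℝ) ≤ (n i0 : ℝ) := by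
            have h := v.2.is_lt
            have h' : n v.1 = n i0 := congrArg n hv
            exact_mod_cast le_of_lt (lt_of_lt_of_le h (le_of_eq h'))
          have h0 : (0 : ℝ) ≤ ((v.2 : ℕ) : ℝ) := Nat.cast_nonneg _
          constructor
          · intro _
            simp only [max_le_iff, le_min_iff]
            refine ⟨⟨?_, ?_⟩, ?_, ?_⟩ <;> linarith
          · intro _
            exact ⟨huv, fun h => hu h.1⟩
        · dsimp only
          have h0 : (0 : ℝ) ≤ (n i0 : ℝ) := Nat.cast_nonneg _
          constructor
          · intro _
            simp only [max_le_iff, le_min_iff]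
            refine ⟨⟨?_, ?_⟩, ?_, ?_⟩ <;> linarith
          · intro _
            exact ⟨huv, fun h => hu h.1⟩
    · rw [card_eq_ncard, ncard_edgeSet_map, ncard_top]
  · -- upper bound
    rintro m ⟨H, hle, hco, rfl⟩
    rcases Finset.eq_empty_or_nonempty H.edgeFinset with he | ⟨e, he⟩
    · simp [he]
    · induction e with
      | _ a b =>
        rw [SimpleGraph.mem_edgeFinset, SimpleGraph.mem_edgeSet] at he
        have hpart : ∀ u v, H.Adj u v → u.1 = a.1 := by
          intro u v huv
          exact edges_same_part hle hco huv he
        have hHeq : H = (H.comap (partEmb n a.1)).map (partEmb n a.1) := by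
          ext u v
          constructor
          · intro huv
            have hu : u.1 = a.1 := hpart u v huv
            have hv : v.1 = a.1 := (adj_fst_eq hle huv) ▸ hu
            obtain ⟨u1, u2⟩ := u
            obtain ⟨v1, v2⟩ := v
            dsimp at hu hv
            subst hu; subst hv
            exact ⟨huv.ne, u2, v2, huv, rfl, rfl⟩
          · rintro ⟨-, x, y, hxy, rfl, rfl⟩
            exact hxy
        rw [card_eq_ncard]
        calc H.edgeSet.ncard
            = (H.comap (partEmb n a.1)).edgeSet.ncard := by
              conv_lhs => rw [hHeq]
              rw [ncard_edgeSet_map]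
          _ ≤ (⊤ : SimpleGraph (Fin (n a.1))).edgeSet.ncard := by
              apply Set.ncard_le_ncard
              · exact SimpleGraph.edgeSet_mono le_top
              · exact Set.toFinite _
          _ = (n a.1).choose 2 := ncard_top _
          _ ≤ (n i0).choose 2 := Nat.choose_le_choose 2 (hmax a.1)
end

section
/- The boxicity of the complete multipartite graph K_{n_1,...,n_k} equals the number of indices i with n_i ≥ 2. -/
open scoped Classical

lemma upper (k : ℕ) (n : Fin k → ℕ) :
    HasBoxRep (completeMultipartite k n)
      (Finset.univ.filter (fun i : Fin k => 2 ≤ n i)).card := by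
  set S := Finset.univ.filter (fun i : Fin k => 2 ≤ n i) with hS
  let e := S.equivFin
  refine ⟨fun x d => if ((e.symm d : Fin k) = x.1) then ((x.2 : ℝ), (x.2 : ℝ))
      else (-1, (n (e.symm d) : ℝ)), ?_, ?_⟩
  · intro v i
    dsimp only
    split
    · exact le_refl _
    · have : (0:ℝ) ≤ n (e.symm i) := Nat.cast_nonneg _
      dsimp only
      linarith
  · rintro ⟨i, a⟩ ⟨j, b⟩ huv
    constructor
    · intro hadj d
      have hij : i ≠ j := by
        rcases (SimpleGraph.fromRel_adj _ _ _).1 hadj with ⟨-, h | h⟩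
        · simpa using h
        · simpa using Ne.symm h
      dsimp only
      by_cases h1 : (e.symm d : Fin k) = i
      · have h2 : ¬ ((e.symm d : Fin k) = j) := fun h => hij (h1.symm.trans h)
        rw [if_pos h1, if_neg h2]
        have ha : (a : ℝ) < n (e.symm d : Fin k) := by
          rw [h1]; exact_mod_cast a.2
        simp only [max_le_iff, le_min_iff]
        have hb0 : (-1:ℝ) ≤ (a:ℝ) := by
          have : (0:ℝ) ≤ (a:ℝ) := Nat.cast_nonneg _
          linarith
        refine ⟨⟨?_,?_⟩,⟨?_,?_⟩⟩ <;> linarith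
      · rw [if_neg h1]
        by_cases h2 : (e.symm d : Fin k) = j
        · rw [if_pos h2]
          have hb : (b : ℝ) < n (e.symm d : Fin k) := by
            rw [h2]; exact_mod_cast b.2
          simp only [max_le_iff, le_min_iff]
          have hb0 : (-1:ℝ) ≤ (b:ℝ) := by
            have : (0:ℝ) ≤ (b:ℝ) := Nat.cast_nonneg _
            linarith
          refine ⟨⟨?_,?_⟩,⟨?_,?_⟩⟩ <;> linarith
        · rw [if_neg h2]
          simp only [max_le_iff, le_min_iff]
          have : (0:ℝ) ≤ n (e.symm d : Fin k) := Nat.cast_nonneg _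
          refine ⟨⟨by linarith, by linarith⟩, ⟨by linarith, by linarith⟩⟩
    · intro hbox
      by_contra hadj
      have hij : i = j := by
        by_contra hij
        exact hadj ((SimpleGraph.fromRel_adj _ _ _).2 ⟨huv, Or.inl (by simpa using hij)⟩)
      subst hij
      have hab : a ≠ b := fun h => huv (by rw [h])
      have hvab : a.val ≠ b.val := fun h => hab (Fin.ext h)
      have h2n : 2 ≤ n i := by
        have := a.2; have := b.2; omega
      have hiS : i ∈ S := by simp [hS, h2n]
      have hd : (e.symm (e ⟨i, hiS⟩) : Fin k) = i := by simp
      have := hbox (e ⟨i, hiS⟩)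
      dsimp only at this
      rw [if_pos hd, if_pos hd] at this
      simp only [max_le_iff, le_min_iff] at this
      have hr : (a.val:ℝ) = (b.val:ℝ) := by linarith [this.1.2, this.2.1]
      exact hvab (by exact_mod_cast hr)

lemma interval_helper (I1 I2 J1 J2 : ℝ × ℝ)
    (hI1 : I1.1 ≤ I1.2) (hI2 : I2.1 ≤ I2.2)
    (hI : ¬ max I1.1 I2.1 ≤ min I1.2 I2.2)
    (hJ : ¬ max J1.1 J2.1 ≤ min J1.2 J2.2)
    (h11 : max I1.1 J1.1 ≤ min I1.2 J1.2)
    (h12 : max I1.1 J2.1 ≤ min I1.2 J2.2)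
    (h21 : max I2.1 J1.1 ≤ min I2.2 J1.2)
    (h22 : max I2.1 J2.1 ≤ min I2.2 J2.2) : False := by
  rw [not_le] at hI hJ
  simp only [min_lt_iff, lt_max_iff] at hI hJ
  simp only [max_le_iff, le_min_iff] at h11 h12 h21 h22
  obtain ⟨⟨a,b⟩,⟨c,d⟩⟩ := h11
  obtain ⟨⟨a2,b2⟩,⟨c2,d2⟩⟩ := h12
  obtain ⟨⟨a3,b3⟩,⟨c3,d3⟩⟩ := h21
  obtain ⟨⟨a4,b4⟩,⟨c4,d4⟩⟩ := h22
  rcases hI with (h|h)|(h|h) <;> rcases hJ with (g|g)|(g|g) <;> linarith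

lemma lower (k : ℕ) (n : Fin k → ℕ) (m : ℕ)
    (h : HasBoxRep (completeMultipartite k n) m) :
    (Finset.univ.filter (fun i : Fin k => 2 ≤ n i)).card ≤ m := by
  classical
  set S := Finset.univ.filter (fun i : Fin k => 2 ≤ n i) with hS
  obtain ⟨f, hval, hadj⟩ := h
  have hn : ∀ x : {i // i ∈ S}, 2 ≤ n x := by
    intro x; exact (Finset.mem_filter.1 x.2).2
  let u : {i // i ∈ S} → (Σ i : Fin k, Fin (n i)) :=
    fun x => ⟨x, ⟨0, by have := hn x; omega⟩⟩
  let v : {i // i ∈ S} → (Σ i : Fin k, Fin (n i)) :=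
    fun x => ⟨x, ⟨1, by have := hn x; omega⟩⟩
  have huvne : ∀ x, u x ≠ v x := by
    intro x h
    simp only [u, v, Sigma.mk.inj_iff, heq_eq_eq, Fin.mk.injEq, and_true, true_and] at h
    exact absurd h (by norm_num)
  have hnonadj : ∀ x, ¬ (completeMultipartite k n).Adj (u x) (v x) := by
    intro x h
    rcases (SimpleGraph.fromRel_adj _ _ _).1 h with ⟨-, h | h⟩ <;> simp [u, v] at h
  have hdis : ∀ x, ∃ d : Fin m,
      ¬ max (f (u x) d).1 (f (v x) d).1 ≤ min (f (u x) d).2 (f (v x) d).2 := by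
    intro x
    have := (hadj (u x) (v x) (huvne x)).not.1 (hnonadj x)
    push_neg at this
    obtain ⟨d, hd⟩ := this
    exact ⟨d, not_le.2 hd⟩
  let D : {i // i ∈ S} → Fin m := fun x => (hdis x).choose
  have hadj' : ∀ (x y : {i // i ∈ S}), x ≠ y →
      ∀ (a : Fin (n x)) (b : Fin (n y)),
      (completeMultipartite k n).Adj ⟨x, a⟩ ⟨y, b⟩ := by
    intro x y hxy a b
    have hxy' : (x : Fin k) ≠ y := fun h => hxy (Subtype.ext h)
    refine (SimpleGraph.fromRel_adj _ _ _).2 ⟨?_, Or.inl hxy'⟩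
    intro h
    exact hxy' (congrArg Sigma.fst h)
  have hDinj : Function.Injective D := by
    intro x y hxy
    by_contra hne
    have hd1 := (hdis x).choose_spec
    have hd2 := (hdis y).choose_spec
    rw [show (hdis y).choose = (hdis x).choose from hxy.symm] at hd2
    set d := (hdis x).choose
    have hux : u x ≠ u y := by
      intro h; exact (fun h' => hne (Subtype.ext h')) (congrArg Sigma.fst h)
    have h11 := ((hadj (u x) (u y) hux).1 (hadj' x y hne _ _)) d
    have h12 := ((hadj (u x) (v y) (by
      intro h; exact (fun h' => hne (Subtype.ext h')) (congrArg Sigma.fst h))).1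
      (hadj' x y hne _ _)) d
    have h21 := ((hadj (v x) (u y) (by
      intro h; exact (fun h' => hne (Subtype.ext h')) (congrArg Sigma.fst h))).1
      (hadj' x y hne _ _)) d
    have h22 := ((hadj (v x) (v y) (by
      intro h; exact (fun h' => hne (Subtype.ext h')) (congrArg Sigma.fst h))).1
      (hadj' x y hne _ _)) d
    exact interval_helper (f (u x) d) (f (v x) d) (f (u y) d) (f (v y) d)
      (hval _ _) (hval _ _) hd1 hd2 h11 h12 h21 h22
  calc S.card = Fintype.card {i // i ∈ S} := (Fintype.card_coe S).symm
    _ ≤ Fintype.card (Fin m) := Fintype.card_le_of_injective D hDinj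
    _ = m := Fintype.card_fin m

/-- Roberts: the boxicity of a complete multipartite graph equals the number of
parts of size at least two. -/
theorem boxicity_completeMultipartite (k : ℕ) (n : Fin k → ℕ) :
    boxicity (completeMultipartite k n) =
      (Finset.univ.filter (fun i : Fin k => 2 ≤ n i)).card := by
  have h1 := upper k n
  exact le_antisymm (Nat.sInf_le h1) (le_csInf ⟨_, h1⟩ fun m hm => lower k n m hm)
end
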